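/- Let F be a field of prime characteristic p and let A ∈ M_n(F) be a nil-clean matrix. Then there exists an integer k ∈ {1, ..., p} such that the trace of A equals k·1 (k·1 denoting the image of k in F) and either k ≤ n or k = p. -/

import Mathlib

/-- An element of a ring is *nil-clean* if it is the sum of an idempotent
and a nilpotent element. -/
def IsNilClean {R : Type*} [Ring R] (a : R) : Prop :=
  ∃ e n : R, e ^ 2 = e ∧ IsNilpotent n ∧ a = e + n

lemma trace_idem {F : Type*} [Field F] {n : ℕ} (e : Matrix (Fin n) (Fin n) F)
    (he : e ^ 2 = e) : ∃ r : ℕ, r ≤ n ∧ e.trace = (r : F) := by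
  have hcomp : Matrix.toLin' e ∘ₗ Matrix.toLin' e = Matrix.toLin' e := by
    rw [← Matrix.toLin'_mul, ← pow_two, he]
  obtain ⟨p, hp⟩ := (LinearMap.isProj_iff_isIdempotentElem (Matrix.toLin' e)).mpr hcomp
  refine ⟨Module.finrank F p, ?_, ?_⟩
  · simpa using Submodule.finrank_le p
  · have := hp.trace
    rwa [LinearMap.trace_eq_matrix_trace F (Pi.basisFun F (Fin n)),
      LinearMap.toMatrix_eq_toMatrix', LinearMap.toMatrix'_toLin'] at this

/-- Over a field of prime characteristic `p`, the trace of a nil-clean `n × n`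
matrix is `k·1` for some `k ∈ {1, ..., p}` with `k ≤ n` or `k = p`. -/
theorem stmt_8 {F : Type*} [Field F] {p : ℕ} (hp : p.Prime) [CharP F p] {n : ℕ}
    (A : Matrix (Fin n) (Fin n) F) (hA : IsNilClean A) :
    ∃ k : ℕ, 1 ≤ k ∧ k ≤ p ∧ A.trace = (k : F) ∧ (k ≤ n ∨ k = p) := by
  obtain ⟨e, N, he, hN, rfl⟩ := hA
  have htrN : N.trace = 0 := by
    have := Matrix.isNilpotent_trace_of_isNilpotent hN
    exact this.eq_zero
  obtain ⟨r, hrn, hre⟩ := trace_idem e he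
  have htr : (e + N).trace = (r : F) := by
    rw [Matrix.trace_add, htrN, add_zero, hre]
  by_cases hdvd : p ∣ r
  · refine ⟨p, hp.one_lt.le, le_rfl, ?_, Or.inr rfl⟩
    rw [htr, (CharP.cast_eq_zero_iff F p r).mpr hdvd, CharP.cast_eq_zero]
  · refine ⟨r % p, ?_, (Nat.mod_lt r hp.pos).le, ?_, Or.inl ((Nat.mod_le r p).trans hrn)⟩
    · exact Nat.one_le_iff_ne_zero.mpr fun h => hdvd (Nat.dvd_of_mod_eq_zero h)
    · rw [htr, CharP.natCast_eq_natCast_mod F p r]
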